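/- Let φ ∈ Lip_0(M)* be normal, let f ∈ Lip_0(M) be non-negative with bounded support, let ε > 0, and let E_k be an increasing sequence of finite subsets of M with union E. Define e_k(x) = max(1 − (1/ε)·d(x,E_k), 0). Then the sequence (e_k·f) is norm-bounded in Lip_0(M), increases pointwise to a limit g with g = f on E, and φ(e_k·f) converges. -/

import Mathlib

open Filter Metric Topology NNReal


/-- The set of Lipschitz functions `M → ℝ` vanishing at the base point, as a
submodule of `M → ℝ`. -/
def Lip0Sub (M : Type*) [MetricSpace M] (base : M) : Submodule ℝ (M → ℝ) where
  carrier := {f | (∃ K, LipschitzWith K f) ∧ f base = 0}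
  add_mem' := by
    rintro f g ⟨⟨Kf, hf⟩, hf0⟩ ⟨⟨Kg, hg⟩, hg0⟩
    exact ⟨⟨Kf + Kg, hf.add hg⟩, by simp [Pi.add_apply, hf0, hg0]⟩
  zero_mem' := ⟨⟨0, LipschitzWith.const 0⟩, rfl⟩
  smul_mem' := by
    rintro c f ⟨⟨Kf, hf⟩, hf0⟩
    exact ⟨⟨‖c‖₊ * Kf, (lipschitzWith_smul c).comp hf⟩, by simp [Pi.smul_apply, hf0]⟩

/-- The space `Lip₀(M)` of Lipschitz functions vanishing at the base point.
(A type synonym, so that it carries the Lipschitz-norm topology rather than the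
topology of pointwise convergence.) -/
def Lip0 (M : Type*) [MetricSpace M] (base : M) : Type _ := ↥(Lip0Sub M base)

variable {M : Type*} [MetricSpace M] {base : M}

instance : AddCommGroup (Lip0 M base) :=
  inferInstanceAs (AddCommGroup ↥(Lip0Sub M base))

noncomputable instance : Module ℝ (Lip0 M base) :=
  inferInstanceAs (Module ℝ ↥(Lip0Sub M base))

/-- An element of `Lip₀(M)` is a function on `M`. -/
instance : CoeFun (Lip0 M base) (fun _ => M → ℝ) :=
  ⟨fun f => (Subtype.val f : M → ℝ)⟩

theorem Lip0.prop (f : Lip0 M base) :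
    (∃ K, LipschitzWith K (f : M → ℝ)) ∧ (f : M → ℝ) base = 0 :=
  Subtype.prop f

/-- The quantity defining the Lipschitz norm. -/
noncomputable def Lip0.lipNorm (f : Lip0 M base) : ℝ :=
  ⨆ p : M × M, |f p.1 - f p.2| / dist p.1 p.2

theorem Lip0.ratio_le (f : Lip0 M base) {K : ℝ≥0} (hK : LipschitzWith K (f : M → ℝ))
    (p : M × M) : |f p.1 - f p.2| / dist p.1 p.2 ≤ K := by
  rcases eq_or_ne p.1 p.2 with h | h
  · simp [h, K.coe_nonneg]
  · rw [div_le_iff₀ (dist_pos.2 h)]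
    simpa [Real.dist_eq] using hK.dist_le_mul p.1 p.2

theorem Lip0.bddAbove (f : Lip0 M base) :
    BddAbove (Set.range fun p : M × M => |f p.1 - f p.2| / dist p.1 p.2) := by
  obtain ⟨K, hK⟩ := f.prop.1
  exact ⟨K, by rintro r ⟨p, rfl⟩; exact f.ratio_le hK p⟩

theorem Lip0.ratio_le_lipNorm (f : Lip0 M base) (p : M × M) :
    |f p.1 - f p.2| / dist p.1 p.2 ≤ f.lipNorm :=
  le_ciSup f.bddAbove p

theorem Lip0.lipNorm_nonneg (f : Lip0 M base) : 0 ≤ f.lipNorm := by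
  have := f.ratio_le_lipNorm (base, base)
  simpa using this

/-- The Lipschitz norm on `Lip₀(M)`: the best Lipschitz constant,
`‖f‖ = sup_{x ≠ y} |f x - f y| / d(x,y)`. -/
noncomputable instance Lip0.normedAddCommGroup :
    NormedAddCommGroup (Lip0 M base) :=
  AddGroupNorm.toNormedAddCommGroup
    { toFun := fun f => f.lipNorm
      map_zero' := by
        have h : ∀ p : M × M,
            |(0 : Lip0 M base) p.1 - (0 : Lip0 M base) p.2| / dist p.1 p.2 = 0 := by
          intro p
          show |(0:ℝ) - 0| / _ = 0
          simp
        haveI : Nonempty (M × M) := ⟨(base, base)⟩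
        simp only [Lip0.lipNorm, h, ciSup_const]
      add_le' := by
        intro f g
        haveI : Nonempty (M × M) := ⟨(base, base)⟩
        apply ciSup_le
        intro p
        rcases eq_or_ne p.1 p.2 with h | h
        · have : dist p.1 p.2 = 0 := by simp [h]
          rw [this, div_zero]
          exact add_nonneg f.lipNorm_nonneg g.lipNorm_nonneg
        · have hd : (0:ℝ) < dist p.1 p.2 := dist_pos.2 h
          have h1 : |(f + g) p.1 - (f + g) p.2| ≤ |f p.1 - f p.2| + |g p.1 - g p.2| := by
            show |(f p.1 + g p.1) - (f p.2 + g p.2)| ≤ _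
            rw [add_sub_add_comm]
            exact abs_add_le _ _
          calc |(f + g) p.1 - (f + g) p.2| / dist p.1 p.2
              ≤ (|f p.1 - f p.2| + |g p.1 - g p.2|) / dist p.1 p.2 := by gcongr
            _ ≤ f.lipNorm + g.lipNorm := by
                rw [add_div]
                exact add_le_add (f.ratio_le_lipNorm p) (g.ratio_le_lipNorm p)
      neg' := by
        intro f
        show Lip0.lipNorm _ = Lip0.lipNorm _
        unfold Lip0.lipNorm
        congr 1
        funext p
        show |(- f p.1) - (- f p.2)| / _ = _
        rw [neg_sub_neg, abs_sub_comm]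
      eq_zero_of_map_eq_zero' := by
        intro f hf
        have hconst : ∀ x y : M, f x = f y := by
          intro x y
          rcases eq_or_ne x y with h | h
          · rw [h]
          · have h1 : |f x - f y| / dist x y ≤ 0 := hf ▸ f.ratio_le_lipNorm (x, y)
            have h2 : (0:ℝ) ≤ |f x - f y| / dist x y :=
              div_nonneg (abs_nonneg _) dist_nonneg
            rcases div_eq_zero_iff.1 (le_antisymm h1 h2) with h3 | h3
            · exact sub_eq_zero.1 (abs_eq_zero.1 h3)
            · exact absurd h3 (dist_ne_zero.2 h)
        have hzero : ∀ x, f x = 0 := fun x => (hconst x base).trans f.prop.2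
        exact Subtype.ext (funext hzero) }

noncomputable instance Lip0.normedSpace : NormedSpace ℝ (Lip0 M base) :=
  { norm_smul_le := by
      intro c f
      haveI : Nonempty (M × M) := ⟨(base, base)⟩
      apply ciSup_le
      intro p
      have heq : |(c • f) p.1 - (c • f) p.2| / dist p.1 p.2
          = |c| * (|f p.1 - f p.2| / dist p.1 p.2) := by
        show |c * f p.1 - c * f p.2| / dist p.1 p.2 = _
        rw [← mul_sub, abs_mul, mul_div_assoc]
      rw [heq]
      calc |c| * (|f p.1 - f p.2| / dist p.1 p.2)
          ≤ |c| * f.lipNorm :=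
            mul_le_mul_of_nonneg_left (f.ratio_le_lipNorm p) (abs_nonneg c)
        _ = ‖c‖ * ‖f‖ := rfl }

/-- Evaluation functional `δ(x) ∈ Lip₀(M)*`. -/
noncomputable def deltaF (base : M) (x : M) : StrongDual ℝ (Lip0 M base) :=
  LinearMap.mkContinuous
    { toFun := fun f => f x
      map_add' := fun _ _ => rfl
      map_smul' := fun _ _ => rfl }
    (dist x base)
    (by
      intro f
      show |f x| ≤ dist x base * ‖f‖
      rcases eq_or_ne x base with h | h
      · simp [h, f.prop.2, mul_nonneg dist_nonneg f.lipNorm_nonneg]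
      · have h1 : |f x - f base| / dist x base ≤ ‖f‖ := f.ratio_le_lipNorm (x, base)
        have h2 : |f x - f base| ≤ dist x base * ‖f‖ := by
          rw [div_le_iff₀ (dist_pos.2 (by simpa using h))] at h1
          linarith [h1]
        simpa [f.prop.2] using h2)

/-- The Lipschitz-free space `F(M)`, realized as the closed linear span of the
evaluation functionals inside `Lip₀(M)*`. -/
noncomputable def FreeSpace (base : M) : Set (StrongDual ℝ (Lip0 M base)) :=
  closure ((Submodule.span ℝ (Set.range (deltaF base)) :
    Submodule ℝ (StrongDual ℝ (Lip0 M base))) : Set (StrongDual ℝ (Lip0 M base)))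

/-- A functional `φ ∈ Lip₀(M)* = F(M)**` is *normal* if for every norm-bounded net
converging pointwise and monotonically to `f ∈ Lip₀(M)`, the values `φ(fᵢ)` converge
to `φ(f)`. -/
def IsNormal (base : M) (φ : StrongDual ℝ (Lip0 M base)) : Prop :=
  ∀ (ι : Type) [Preorder ι] [Nonempty ι] [IsDirected ι (· ≤ ·)]
    (F : ι → Lip0 M base) (f : Lip0 M base) (C : ℝ),
    (∀ i, ‖F i‖ ≤ C) →
    ((∀ x, Monotone fun i => (F i) x) ∨ (∀ x, Antitone fun i => (F i) x)) →
    (∀ x, Tendsto (fun i => (F i) x) atTop (𝓝 (f x))) →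
    Tendsto (fun i => φ (F i)) atTop (𝓝 (φ f))

/-- for normal `φ`, nonnegative `f ∈ Lip₀(M)` with bounded support,
`ε > 0` and an increasing sequence of nonempty finite sets `E_k` with union `E`, the
functions `e_k·f` (with `e_k(x) = max(1 - d(x,E_k)/ε, 0)`) form a norm-bounded
sequence increasing pointwise to a limit `g` with `g = f` on `E`, and `φ(e_k·f)`
converges. -/
theorem truncation_net_converges [CompleteSpace M] (base : M)
    (φ : StrongDual ℝ (Lip0 M base)) (hφ : IsNormal base φ)
    (f : Lip0 M base) (hpos : ∀ x, 0 ≤ f x)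
    (R : ℝ) (hsupp : ∀ x, f x ≠ 0 → dist x base ≤ R)
    (ε : ℝ) (hε : 0 < ε)
    (E : ℕ → Finset M) (hE : Monotone E) (hEne : ∀ k, (E k).Nonempty)
    (g : ℕ → Lip0 M base)
    (hg : ∀ (k : ℕ) (x : M),
      (g k) x = max (1 - infDist x (E k : Set M) / ε) 0 * f x) :
    (∃ C, ∀ k, ‖g k‖ ≤ C) ∧
    (∀ x, Monotone fun k => (g k) x) ∧
    ∃ gl : M → ℝ,
      (∀ x, Tendsto (fun k => (g k) x) atTop (𝓝 (gl x))) ∧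
      (∀ k, ∀ x ∈ E k, gl x = f x) ∧
      ∃ l : ℝ, Tendsto (fun k => φ (g k)) atTop (𝓝 l) := by
  obtain ⟨Kf, hKf⟩ := f.prop.1
  have hf0 : (f : M → ℝ) base = 0 := f.prop.2
  have hflip : ∀ x y : M, |f x - f y| ≤ (Kf : ℝ) * dist x y := by
    intro x y
    simpa [Real.dist_eq] using hKf.dist_le_mul x y
  set R' : ℝ := max R 0 with hR'
  have hR'0 : 0 ≤ R' := le_max_right _ _
  -- bound on |f|
  have hfb : ∀ x, |f x| ≤ (Kf : ℝ) * R' := by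
    intro x
    rcases eq_or_ne (f x) 0 with h | h
    · rw [h, abs_zero]; positivity
    · have h1 : dist x base ≤ R := hsupp x h
      have h2 := hflip x base
      rw [hf0, sub_zero] at h2
      calc |f x| ≤ (Kf : ℝ) * dist x base := h2
        _ ≤ (Kf : ℝ) * R' := by
            apply mul_le_mul_of_nonneg_left _ Kf.coe_nonneg
            exact h1.trans (le_max_left _ _)
  -- the cutoff functions
  set e : ℕ → M → ℝ := fun k x => max (1 - infDist x (E k : Set M) / ε) 0 with he
  have he0 : ∀ k x, 0 ≤ e k x := fun k x => le_max_right _ _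
  have he1 : ∀ k x, e k x ≤ 1 := by
    intro k x
    apply max_le _ zero_le_one
    have : 0 ≤ infDist x (E k : Set M) / ε := div_nonneg infDist_nonneg hε.le
    linarith
  have heb : ∀ k x, |e k x| ≤ 1 := by
    intro k x; rw [abs_of_nonneg (he0 k x)]; exact he1 k x
  have heLip : ∀ k x y, |e k x - e k y| ≤ (1 / ε) * dist x y := by
    intro k x y
    calc |e k x - e k y|
        ≤ |(1 - infDist x (E k : Set M) / ε) - (1 - infDist y (E k : Set M) / ε)| :=
          abs_max_sub_max_le_abs _ _ _
      _ = |infDist y (E k : Set M) - infDist x (E k : Set M)| / ε := by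
          have h3 : (1 - infDist x (E k : Set M) / ε) - (1 - infDist y (E k : Set M) / ε)
              = (infDist y (E k : Set M) - infDist x (E k : Set M)) / ε := by ring
          rw [h3, abs_div, abs_of_pos hε]
      _ ≤ dist x y / ε := by
          gcongr
          rw [abs_sub_le_iff]
          have h4 := infDist_le_infDist_add_dist (x := y) (y := x) (s := (E k : Set M))
          have h5 := infDist_le_infDist_add_dist (x := x) (y := y) (s := (E k : Set M))
          have h6 := dist_comm x y
          constructor <;> linarith
      _ = (1 / ε) * dist x y := by ring
  -- Lipschitz bound on g k
  set C : ℝ := 1 * (Kf : ℝ) + (1 / ε) * ((Kf : ℝ) * R') with hC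
  have hC0 : 0 ≤ C := by positivity
  have hgfx : ∀ k x, (g k) x = e k x * f x := fun k x => hg k x
  have hgLip : ∀ k x y, |(g k) x - (g k) y| ≤ C * dist x y := by
    intro k x y
    rw [hgfx k x, hgfx k y]
    have key : e k x * f x - e k y * f y
        = e k x * (f x - f y) + (e k x - e k y) * f y := by ring
    rw [key]
    calc |e k x * (f x - f y) + (e k x - e k y) * f y|
        ≤ |e k x| * |f x - f y| + |e k x - e k y| * |f y| := by
          refine (abs_add_le _ _).trans ?_
          rw [abs_mul, abs_mul]
      _ ≤ 1 * ((Kf : ℝ) * dist x y) + ((1 / ε) * dist x y) * ((Kf : ℝ) * R') := by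
          have := mul_le_mul (heb k x) (hflip x y) (abs_nonneg _) zero_le_one
          have := mul_le_mul (heLip k x y) (hfb y) (abs_nonneg _)
            (mul_nonneg (by positivity) dist_nonneg)
          linarith
      _ = C * dist x y := by rw [hC]; ring
  have hnorm : ∀ k, ‖g k‖ ≤ C := by
    intro k
    haveI : Nonempty (M × M) := ⟨(base, base)⟩
    apply ciSup_le
    intro p
    rcases eq_or_ne p.1 p.2 with h | h
    · simp [h, hC0]
    · rw [div_le_iff₀ (dist_pos.2 h)]
      exact hgLip k p.1 p.2
  -- monotonicity
  have hmono : ∀ x, Monotone fun k => (g k) x := by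
    intro x k l hkl
    simp only
    rw [hgfx k x, hgfx l x]
    apply mul_le_mul_of_nonneg_right _ (hpos x)
    apply max_le_max _ le_rfl
    have hsub : (E k : Set M) ⊆ (E l : Set M) := by
      exact_mod_cast hE hkl
    have hd : infDist x (E l : Set M) ≤ infDist x (E k : Set M) :=
      infDist_le_infDist_of_subset hsub (Finset.coe_nonempty.2 (hEne k))
    have : infDist x (E l : Set M) / ε ≤ infDist x (E k : Set M) / ε := by gcongr
    linarith
  -- pointwise limit
  have hub : ∀ k x, (g k) x ≤ f x := by
    intro k x
    rw [hgfx k x]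
    calc e k x * f x ≤ 1 * f x := mul_le_mul_of_nonneg_right (he1 k x) (hpos x)
      _ = f x := one_mul _
  set gl : M → ℝ := fun x => ⨆ k, (g k) x with hgl
  have hbdd : ∀ x, BddAbove (Set.range fun k => (g k) x) := by
    intro x
    exact ⟨f x, by rintro r ⟨k, rfl⟩; exact hub k x⟩
  have htends : ∀ x, Tendsto (fun k => (g k) x) atTop (𝓝 (gl x)) := by
    intro x
    exact tendsto_atTop_ciSup (hmono x) (hbdd x)
  -- gl = f on each E k
  have hglE : ∀ k, ∀ x ∈ E k, gl x = f x := by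
    intro k x hx
    have hev : ∀ l, k ≤ l → (g l) x = f x := by
      intro l hkl
      have hxl : x ∈ (E l : Set M) := by
        exact_mod_cast hE hkl hx
      rw [hgfx l x, he]
      simp [infDist_zero_of_mem hxl]
    have h1 : Tendsto (fun l => (g l) x) atTop (𝓝 (f x)) := by
      apply Tendsto.congr' _ tendsto_const_nhds
      filter_upwards [eventually_ge_atTop k] with l hl
      exact (hev l hl).symm
    exact tendsto_nhds_unique (htends x) h1
  -- gl is in Lip0
  have hglLip : ∀ x y, |gl x - gl y| ≤ C * dist x y := by
    intro x y
    have h1 : Tendsto (fun k => (g k) x - (g k) y) atTop (𝓝 (gl x - gl y)) :=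
      (htends x).sub (htends y)
    have h2 : Tendsto (fun k => |(g k) x - (g k) y|) atTop (𝓝 |gl x - gl y|) :=
      h1.abs
    exact le_of_tendsto h2 (Eventually.of_forall fun k => hgLip k x y)
  have hglbase : gl base = 0 := by
    have h1 : Tendsto (fun k => (g k) base) atTop (𝓝 (0 : ℝ)) := by
      apply Tendsto.congr' _ tendsto_const_nhds
      filter_upwards with k
      rw [hgfx k base, hf0, mul_zero]
    exact tendsto_nhds_unique (htends base) h1
  have hglmem : gl ∈ Lip0Sub M base := by
    refine ⟨⟨⟨C, hC0⟩, ?_⟩, hglbase⟩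
    apply LipschitzWith.of_dist_le_mul
    intro x y
    rw [Real.dist_eq]
    exact hglLip x y
  set glL : Lip0 M base := ⟨gl, hglmem⟩ with hglL
  refine ⟨⟨C, hnorm⟩, hmono, gl, htends, hglE, φ glL, ?_⟩
  exact hφ ℕ g glL C hnorm (Or.inl hmono) htends
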